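/- Suppose there exists a linear (r,r,d)-robust batch code C : F^k → F^n with n < k(d+1) and r < k. Then there exists a linear (r,r,d)-robust batch code C' : F^{k−1} → F^{n − (d+1) − (k−r)}. -/

import Mathlib

open Finset Submodule Module

/-- A linear map `C : F^k → F^n` is an `(r,r,d)`-robust batch code: for every
request set `I` of size `r` and erasure set `D` of size `d`, some query set `J`
of size at most `r`, disjoint from `D`, determines `x|_I`. -/
def IsRBC (F : Type) [Field F] (k n r d : ℕ)
    (C : (Fin k → F) →ₗ[F] (Fin n → F)) : Prop :=
  ∀ I : Finset (Fin k), I.card = r → ∀ D : Finset (Fin n), D.card = d →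
    ∃ J : Finset (Fin n), J.card ≤ r ∧ Disjoint J D ∧
      ∀ x y : Fin k → F, (∀ j ∈ J, C x j = C y j) → ∀ i ∈ I, x i = y i



lemma expandC {F : Type} [Field F] {k n : ℕ}
    (C : (Fin k → F) →ₗ[F] (Fin n → F)) (x : Fin k → F) (j : Fin n) :
    C x j = ∑ i, x i * C (Pi.single i 1) j := by
  have hx : x = ∑ i, x i • (Pi.single i 1 : Fin k → F) := by
    funext i'
    simp [Finset.sum_apply, Pi.single_apply]
  conv_lhs => rw [hx, map_sum]
  simp [Finset.sum_apply]

/-- Key lemma: if `J` with `|J| ≤ r` determines the `r` coordinates in `I`,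
then each column used in `J` is supported inside `I`. -/
lemma keyL {F : Type} [Field F] {k n r : ℕ}
    (C : (Fin k → F) →ₗ[F] (Fin n → F))
    (I : Finset (Fin k)) (hI : I.card = r)
    (J : Finset (Fin n)) (hJ : J.card ≤ r)
    (hdet : ∀ x y : Fin k → F, (∀ j ∈ J, C x j = C y j) → ∀ i ∈ I, x i = y i) :
    ∀ j ∈ J, ∀ i0 ∉ I, C (Pi.single i0 1) j = 0 := by
  classical
  set col : Fin n → (Fin k → F) := fun j i => C (Pi.single i 1) j with hcol
  set W : Submodule F (Fin k → F) := span F (col '' ↑J) with hW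
  have step1 : ∀ i ∈ I, (Pi.single i 1 : Fin k → F) ∈ W := by
    intro i hi
    by_contra hmem
    obtain ⟨φ, hφx, hφmap⟩ :=
      Submodule.exists_dual_map_eq_bot_of_notMem hmem inferInstance
    set x : Fin k → F := fun i' => φ (Pi.single i' 1) with hxdef
    have hCx : ∀ j ∈ J, C x j = C 0 j := by
      intro j hj
      have hcolW : col j ∈ W := by
        rw [hW]; exact subset_span ⟨j, hj, rfl⟩
      have hφcol : φ (col j) = 0 := by
        have h6 : φ (col j) ∈ W.map φ := Submodule.mem_map_of_mem hcolW
        rw [hφmap] at h6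
        exact (Submodule.mem_bot F).1 h6
      have hexp : φ (col j) = ∑ i', col j i' * x i' := by
        conv_lhs => rw [pi_eq_sum_univ (col j), map_sum]
        refine Finset.sum_congr rfl fun i' _ => ?_
        rw [map_smul]
        simp only [smul_eq_mul, hxdef]
        congr 1
        congr 1
        funext j'
        simp [Pi.single_apply, eq_comm]
      rw [map_zero, expandC, Pi.zero_apply]
      rw [hexp] at hφcol
      rw [← hφcol]
      exact Finset.sum_congr rfl fun i' _ => mul_comm _ _
    have h7 := hdet x 0 hCx i hi
    rw [Pi.zero_apply] at h7
    exact hφx h7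
  -- Step 2-4
  have hle : span F ((fun i => Pi.single i (1:F)) '' (↑I : Set (Fin k))) ≤ W := by
    rw [span_le]
    rintro v ⟨i, hi, rfl⟩
    exact step1 i hi
  have li : LinearIndependent F
      (fun i : ↥(↑I : Set (Fin k)) => (Pi.single (i : Fin k) 1 : Fin k → F)) := by
    have hb := (Pi.basisFun F (Fin k)).linearIndependent
    have h2 := hb.comp (Subtype.val : ↥(↑I : Set (Fin k)) → Fin k) Subtype.val_injective
    have he : (⇑(Pi.basisFun F (Fin k)) ∘ (Subtype.val : ↥(↑I : Set (Fin k)) → Fin k))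
        = fun i : ↥(↑I : Set (Fin k)) => (Pi.single (i : Fin k) 1 : Fin k → F) := by
      funext i
      simp [Function.comp]
    rwa [he] at h2
  have hrankI : finrank F (span F ((fun i => Pi.single i (1:F)) '' (↑I : Set (Fin k)))) = r := by
    have h3 := finrank_span_eq_card li
    rw [Set.image_eq_range (fun i => Pi.single i (1:F)) (↑I : Set (Fin k)), h3]
    simp [hI]
  have hrankW : finrank F W ≤ r := by
    rw [hW]
    have h4 : col '' ↑J = ↑(J.image col) := by simp
    rw [h4]
    calc finrank F (span F (↑(J.image col) : Set (Fin k → F)))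
        ≤ (J.image col).card := finrank_span_finset_le_card _
      _ ≤ J.card := Finset.card_image_le
      _ ≤ r := hJ
  have heq : span F ((fun i => Pi.single i (1:F)) '' (↑I : Set (Fin k))) = W :=
    Submodule.eq_of_le_of_finrank_le hle (by rw [hrankI]; exact hrankW)
  intro j hj i0 hi0
  have hcolW : col j ∈ W := by
    rw [hW]; exact subset_span ⟨j, hj, rfl⟩
  rw [← heq] at hcolW
  have hker : span F ((fun i => Pi.single i (1:F)) '' (↑I : Set (Fin k)))
      ≤ LinearMap.ker (LinearMap.proj (R := F) (φ := fun _ : Fin k => F) i0) := by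
    rw [span_le]
    rintro v ⟨i, hi, rfl⟩
    simp only [SetLike.mem_coe, LinearMap.mem_ker, LinearMap.proj_apply]
    refine Pi.single_eq_of_ne (fun h => hi0 ?_) 1
    rw [h]
    exact hi
  have h5 := hker hcolW
  simp only [LinearMap.mem_ker, LinearMap.proj_apply] at h5
  rw [hcol] at h5
  exact h5

/-- Covering bound. -/
lemma coverL {ι κ : Type*} [DecidableEq ι] [DecidableEq κ] {c s : ℕ} (hc : 1 ≤ c) :
    ∀ (N : ℕ) (X : Finset ι) (B : Finset κ) (U : κ → Finset ι), X.card = N →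
    (∀ j ∈ B, U j ⊆ X ∧ (U j).Nonempty) →
    (∀ T ⊆ X, T.card = s → c ≤ (B.filter (fun j => U j ⊆ T)).card) →
    s ≤ X.card → c + (X.card - s) ≤ B.card := by
  intro N
  induction N with
  | zero =>
    intro X B U hXN hne hcov hs
    have hs0 : s = 0 := by omega
    have h1 := hcov ∅ (by simp) (by simp [hs0])
    have h2 : (B.filter (fun j => U j ⊆ ∅)).card ≤ B.card := card_le_card (filter_subset _ _)
    omega
  | succ N ih =>
    intro X B U hXN hne hcov hs
    rcases eq_or_lt_of_le hs with heq | hlt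
    · have h1 := hcov X (by rfl) heq.symm
      have h2 : (B.filter (fun j => U j ⊆ X)).card ≤ B.card := card_le_card (filter_subset _ _)
      omega
    · obtain ⟨T0, hT0sub, hT0card⟩ := X.exists_subset_card_eq hs
      have hc0 := hcov T0 hT0sub hT0card
      have hBne : (B.filter (fun j => U j ⊆ T0)).Nonempty := by
        rw [← card_pos]; omega
      obtain ⟨j0, hj0⟩ := hBne
      rw [mem_filter] at hj0
      obtain ⟨x, hx⟩ := (hne j0 hj0.1).2
      set B' := B.filter (fun j => x ∉ U j) with hB'
      have hxX : x ∈ X := (hne j0 hj0.1).1 hx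
      have hstep := ih (X.erase x) B' U (by rw [card_erase_of_mem hxX]; omega)
        (by
          intro j hj
          rw [hB', mem_filter] at hj
          constructor
          · intro y hy
            rw [mem_erase]
            exact ⟨fun h => hj.2 (h ▸ hy), (hne j hj.1).1 hy⟩
          · exact (hne j hj.1).2)
        (by
          intro T hT hTcard
          have hTX : T ⊆ X := hT.trans (erase_subset _ _)
          refine le_trans (hcov T hTX hTcard) (card_le_card ?_)
          intro j hj
          rw [mem_filter] at hj ⊢
          refine ⟨?_, hj.2⟩
          rw [hB', mem_filter]
          refine ⟨hj.1, fun hxU => ?_⟩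
          have h8 := hT (hj.2 hxU)
          rw [mem_erase] at h8
          exact h8.1 rfl)
        (by rw [card_erase_of_mem hxX]; omega)
      have hj0B' : j0 ∉ B' := by
        rw [hB', mem_filter]
        push_neg
        intro _
        exact hx
      have hlt2 : B'.card < B.card :=
        card_lt_card (ssubset_iff_of_subset (filter_subset _ _) |>.2 ⟨j0, hj0.1, hj0B'⟩)
      rw [card_erase_of_mem hxX] at hstep
      omega


theorem stmt_6 {F : Type} [Field F] [Fintype F] {k n r d : ℕ}
    (hr : 1 ≤ r) (hrk : r < k) (hn : n < k * (d + 1))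
    (C : (Fin k → F) →ₗ[F] (Fin n → F)) (hC : IsRBC F k n r d C) :
    ∃ C' : (Fin (k - 1) → F) →ₗ[F] (Fin (n - (d + 1) - (k - r)) → F),
      IsRBC F (k - 1) (n - (d + 1) - (k - r)) r d C' := by
  classical
  set n' := n - (d + 1) - (k - r) with hn'
  by_cases htriv : n' < d
  · refine ⟨0, ?_⟩
    intro I hI D hD
    exfalso
    have h1 := Finset.card_le_univ D
    rw [Fintype.card_fin, hD] at h1
    omega
  push_neg at htriv
  -- basic setup
  set S : Fin n → Finset (Fin k) :=
    fun j => univ.filter (fun i => C (Pi.single i 1) j ≠ 0) with hS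
  set P : Fin k → Finset (Fin n) := fun i => univ.filter (fun j => S j = {i}) with hP
  -- pigeonhole: some coordinate has few pure columns
  have hpig : ∃ i0 : Fin k, (P i0).card ≤ d := by
    by_contra hall
    push_neg at hall
    have hdisj : ∀ x ∈ (univ : Finset (Fin k)), ∀ y ∈ univ, x ≠ y → Disjoint (P x) (P y) := by
      intro x _ y _ hxy
      rw [disjoint_left]
      intro j hjx hjy
      rw [hP, mem_filter] at hjx hjy
      rw [hjx.2] at hjy
      exact hxy (Finset.singleton_injective hjy.2)
    have hbi := Finset.card_biUnion hdisj
    have h2 : (univ.biUnion P).card ≤ n := by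
      have := Finset.card_le_univ (univ.biUnion P)
      rwa [Fintype.card_fin] at this
    have h3 : ∑ i : Fin k, (d + 1) ≤ ∑ i : Fin k, (P i).card :=
      Finset.sum_le_sum (fun i _ => hall i)
    rw [Finset.sum_const, card_univ, Fintype.card_fin, smul_eq_mul] at h3
    omega
  obtain ⟨i0, hw⟩ := hpig
  -- claim A
  have claimA : ∀ T ⊆ univ.erase i0, T.card = r - 1 →
      d + 1 ≤ (univ.filter
        (fun j => C (Pi.single i0 1) j ≠ 0 ∧ S j ⊆ insert i0 T)).card := by
    intro T hT hTcard
    by_contra hlt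
    push_neg at hlt
    have hdn : d ≤ n := by omega
    obtain ⟨D, hsubD, hDcard⟩ := Finset.exists_superset_card_eq (s :=
        univ.filter (fun j => C (Pi.single i0 1) j ≠ 0 ∧ S j ⊆ insert i0 T))
      (n := d) (by omega) (by rw [Fintype.card_fin]; omega)
    have hi0T : i0 ∉ T := fun h => (mem_erase.1 (hT h)).1 rfl
    have hIcard : (insert i0 T).card = r := by
      rw [card_insert_of_notMem hi0T, hTcard]; omega
    obtain ⟨J, hJr, hJD, hdet⟩ := hC (insert i0 T) hIcard D hDcard
    have hkey := keyL C (insert i0 T) hIcard J hJr hdet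
    have hex : ∃ j ∈ J, C (Pi.single i0 1) j ≠ 0 := by
      by_contra hno
      push_neg at hno
      have h10 := hdet (Pi.single i0 1) 0
        (fun j hj => by rw [map_zero, Pi.zero_apply]; exact hno j hj)
        i0 (mem_insert_self _ _)
      rw [Pi.single_eq_same, Pi.zero_apply] at h10
      exact one_ne_zero h10
    obtain ⟨j, hjJ, hjcol⟩ := hex
    have hjS : S j ⊆ insert i0 T := by
      intro i hi
      rw [hS, mem_filter] at hi
      by_contra hiI
      exact hi.2 (hkey j hjJ i hiI)
    have hjD : j ∈ D := hsubD (by rw [mem_filter]; exact ⟨mem_univ _, hjcol, hjS⟩)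
    exact (Finset.disjoint_left.1 hJD hjJ) hjD
  -- apply the covering lemma
  set w := (P i0).card with hwdef
  set NP : Finset (Fin n) :=
    univ.filter (fun j => C (Pi.single i0 1) j ≠ 0 ∧ S j ≠ {i0}) with hNP
  have hcov : ∀ T ⊆ univ.erase i0, T.card = r - 1 →
      d + 1 - w ≤ (NP.filter (fun j => (S j).erase i0 ⊆ T)).card := by
    intro T hT hTc
    have hA := claimA T hT hTc
    have hi0T : i0 ∉ T := fun h => (mem_erase.1 (hT h)).1 rfl
    have hsub : univ.filter (fun j => C (Pi.single i0 1) j ≠ 0 ∧ S j ⊆ insert i0 T)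
        ⊆ (NP.filter (fun j => (S j).erase i0 ⊆ T)) ∪ P i0 := by
      intro j hj
      rw [mem_filter] at hj
      rw [mem_union]
      by_cases hp : S j = {i0}
      · right; rw [hP, mem_filter]; exact ⟨mem_univ _, hp⟩
      · left
        rw [mem_filter, hNP, mem_filter]
        refine ⟨⟨mem_univ _, hj.2.1, hp⟩, ?_⟩
        intro i hi
        rw [mem_erase] at hi
        have h11 := hj.2.2 hi.2
        rw [mem_insert] at h11
        rcases h11 with h | h
        · exact absurd h hi.1
        · exact h
    have h12 := card_le_card hsub
    have h13 := card_union_le (NP.filter (fun j => (S j).erase i0 ⊆ T)) (P i0)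
    omega
  have hne : ∀ j ∈ NP, (S j).erase i0 ⊆ univ.erase i0 ∧ ((S j).erase i0).Nonempty := by
    intro j hj
    rw [hNP, mem_filter] at hj
    have hi0S : i0 ∈ S j := by rw [hS, mem_filter]; exact ⟨mem_univ _, hj.2.1⟩
    constructor
    · intro i hi
      rw [mem_erase] at hi ⊢
      exact ⟨hi.1, mem_univ _⟩
    · rw [← card_pos, card_erase_of_mem hi0S]
      have h14 : 1 ≤ (S j).card := card_pos.2 ⟨i0, hi0S⟩
      have h15 : (S j).card ≠ 1 := by
        intro h1
        obtain ⟨a, ha⟩ := card_eq_one.1 h1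
        apply hj.2.2
        rw [ha]
        rw [ha, mem_singleton] at hi0S
        rw [hi0S]
      omega
  have hX : (univ.erase i0).card = k - 1 := by
    rw [card_erase_of_mem (mem_univ _), card_univ, Fintype.card_fin]
  have hcover := coverL (c := d + 1 - w) (s := r - 1) (by omega)
    (univ.erase i0).card (univ.erase i0) NP (fun j => (S j).erase i0) rfl hne hcov
    (by rw [hX]; omega)
  rw [hX] at hcover
  -- total count of columns nonzero at i0
  have hunion : univ.filter (fun j => C (Pi.single i0 1) j ≠ 0) = NP ∪ P i0 := by
    ext j
    rw [mem_filter, mem_union, hNP, mem_filter, hP, mem_filter]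
    constructor
    · rintro ⟨h1, h2⟩
      by_cases hp : S j = {i0}
      · exact Or.inr ⟨h1, hp⟩
      · exact Or.inl ⟨h1, h2, hp⟩
    · rintro (⟨h1, h2, _⟩ | ⟨h1, h2⟩)
      · exact ⟨h1, h2⟩
      · refine ⟨h1, ?_⟩
        have : i0 ∈ S j := by rw [h2]; exact mem_singleton_self _
        rw [hS, mem_filter] at this
        exact this.2
  have hAdisj : Disjoint NP (P i0) := by
    rw [disjoint_left]
    intro j hj1 hj2
    rw [hNP, mem_filter] at hj1
    rw [hP, mem_filter] at hj2
    exact hj1.2.2 hj2.2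
  have hAcard : (univ.filter (fun j => C (Pi.single i0 1) j ≠ 0)).card = NP.card + w := by
    rw [hunion, card_union_of_disjoint hAdisj]
  have hAn : (univ.filter (fun j => C (Pi.single i0 1) j ≠ 0)).card ≤ n := by
    have := Finset.card_le_univ (univ.filter (fun j => C (Pi.single i0 1) j ≠ 0))
    rwa [Fintype.card_fin] at this
  -- extract the deletion set T
  obtain ⟨T, hTA, hTcard⟩ := Finset.exists_subset_card_eq
    (s := univ.filter (fun j => C (Pi.single i0 1) j ≠ 0)) (n := d + 1 + (k - r)) (by omega)
  have hRcard : Tᶜ.card = n' := by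
    rw [card_compl, hTcard, Fintype.card_fin]
    omega
  -- index surgery
  have hk1 : k - 1 + 1 = k := by omega
  set i0' : Fin (k - 1 + 1) := Fin.cast hk1.symm i0 with hi0'
  set f : Fin (k - 1) → Fin k := fun m => Fin.cast hk1 (i0'.succAbove m) with hf
  have hfne : ∀ m, f m ≠ i0 := by
    intro m h
    apply Fin.succAbove_ne i0' m
    rw [Fin.ext_iff] at h ⊢
    simpa [hi0', hf] using h
  have hfinj : Function.Injective f := by
    intro a b hab
    apply Fin.succAbove_right_injective (p := i0')
    rw [Fin.ext_iff] at hab ⊢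
    simpa [hf] using hab
  have hfsurj : ∀ i : Fin k, i ≠ i0 → ∃ m, f m = i := by
    intro i hi
    obtain ⟨m, hm⟩ := Fin.exists_succAbove_eq (x := Fin.cast hk1.symm i) (y := i0')
      (by
        intro h
        apply hi
        rw [Fin.ext_iff] at h ⊢
        simpa [hi0'] using h)
    refine ⟨m, ?_⟩
    rw [hf, Fin.ext_iff]
    rw [Fin.ext_iff] at hm
    simpa using hm
  -- padding map
  set pad : (Fin (k - 1) → F) →ₗ[F] (Fin k → F) :=
    { toFun := fun x => ∑ m, x m • (Pi.single (f m) (1 : F) : Fin k → F)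
      map_add' := by
        intro x y
        simp [add_smul, Finset.sum_add_distrib]
      map_smul' := by
        intro c x
        simp [smul_smul, Finset.smul_sum] } with hpad
  have hpadf : ∀ (x : Fin (k - 1) → F) (m : Fin (k - 1)), pad x (f m) = x m := by
    intro x m
    rw [hpad]
    simp only [LinearMap.coe_mk, AddHom.coe_mk, Finset.sum_apply, Pi.smul_apply,
      Pi.single_apply, smul_eq_mul, mul_ite, mul_one, mul_zero, hfinj.eq_iff]
    simp
  -- the new code
  set g : Fin n' → Fin n := fun j' => ((Tᶜ.orderIsoOfFin hRcard) j' : Fin n) with hg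
  have hginj : Function.Injective g := by
    intro a b hab
    exact (Tᶜ.orderIsoOfFin hRcard).injective (Subtype.ext hab)
  have hgR : ∀ j', g j' ∈ Tᶜ := fun j' => ((Tᶜ.orderIsoOfFin hRcard) j').2
  have hgsurj : ∀ j ∈ Tᶜ, ∃ j', g j' = j := by
    intro j hj
    exact ⟨(Tᶜ.orderIsoOfFin hRcard).symm ⟨j, hj⟩, by
      rw [hg]
      simp⟩
  refine ⟨(LinearMap.funLeft F F g).comp (C.comp pad), ?_⟩
  intro I' hI' D' hD'
  have hIcard : (I'.image f).card = r := by rw [card_image_of_injective _ hfinj, hI']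
  have hDcard : (D'.image g).card = d := by rw [card_image_of_injective _ hginj, hD']
  obtain ⟨J, hJr, hJD, hdet⟩ := hC (I'.image f) hIcard (D'.image g) hDcard
  have hi0I : i0 ∉ I'.image f := by
    rw [mem_image]
    rintro ⟨m, _, hm⟩
    exact hfne m hm
  have hkey := keyL C (I'.image f) hIcard J hJr hdet
  have hJR : ∀ j ∈ J, j ∈ Tᶜ := by
    intro j hj
    rw [mem_compl]
    intro hjT
    have hjA := hTA hjT
    rw [mem_filter] at hjA
    exact hjA.2 (hkey j hj i0 hi0I)
  refine ⟨univ.filter (fun j' : Fin n' => g j' ∈ J), ?_, ?_, ?_⟩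
  · have hsub : (univ.filter (fun j' : Fin n' => g j' ∈ J)).image g ⊆ J := by
      intro j h
      rw [mem_image] at h
      obtain ⟨j', hj', rfl⟩ := h
      exact (mem_filter.1 hj').2
    calc (univ.filter (fun j' : Fin n' => g j' ∈ J)).card
        = ((univ.filter (fun j' : Fin n' => g j' ∈ J)).image g).card :=
          (card_image_of_injective _ hginj).symm
      _ ≤ J.card := card_le_card hsub
      _ ≤ r := hJr
  · rw [disjoint_left]
    intro j' hj' hj'D
    exact (disjoint_left.1 hJD (mem_filter.1 hj').2) (mem_image_of_mem g hj'D)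
  · intro x' y' hagree i' hi'
    have hxy : ∀ j ∈ J, C (pad x') j = C (pad y') j := by
      intro j hj
      obtain ⟨j', hj'eq⟩ := hgsurj j (hJR j hj)
      have hj'J' : j' ∈ univ.filter (fun j' : Fin n' => g j' ∈ J) :=
        mem_filter.2 ⟨mem_univ _, by rw [hj'eq]; exact hj⟩
      have h20 := hagree j' hj'J'
      simp only [LinearMap.comp_apply, LinearMap.funLeft_apply] at h20
      rw [← hj'eq]
      exact h20
    have h21 := hdet (pad x') (pad y') hxy (f i') (mem_image_of_mem f hi')
    rw [hpadf x' i', hpadf y' i'] at h21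
    exact h21
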